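/- arXiv:2410.01537 — 2 statements merged into one kernel-verified Lean document; each statement's English description precedes it below -/
import Mathlib

section
/- Let κ, ν ∈ [−1, 1]. Let V, V′, H, H₂, …, H_L, K₂, …, K_L be independent standard Gaussian real random variables on a probability space, and let ξ be a square-integrable real random variable independent of all of them with E[ξ] = 0 and E[ξ²] = ε². Then E[( γ·(ν·V + √(1 − ν²)·V′) + ξ − γ·V·erf(λ(√(d/2)·κ + γ·H)) − Σ_{ℓ=2}^{L} K_ℓ·erf(λ·H_ℓ) )²] = γ² − 2γ²·ν·erf( λ·√(d/2)·κ / √(1 + 2λ²γ²) ) + γ²·ζ(λ·√(d/2)·κ, λ²γ²) + (L − 1)·ζ(0, λ²) + ε². (This is the closed-form expression of the risk of the attention predictor restricted to the invariant manifold, where the pair (ν·V + √(1 − ν²)·V′, V) is a standard Gaussian pair with correlation ν.) -/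
open MeasureTheory ProbabilityTheory Real Filter
open scoped NNReal ENNReal

noncomputable def erf (u : ℝ) : ℝ := 2 / Real.sqrt Real.pi * ∫ r in (0:ℝ)..u, Real.exp (-r ^ 2)

noncomputable def zeta (t s : ℝ) : ℝ := ∫ g, erf (t + g) ^ 2 ∂(gaussianReal 0 s.toNNReal)

lemma continuous_nexp : Continuous (fun r : ℝ => Real.exp (-r ^ 2)) := by continuity

lemma intervalIntegrable_nexp (a b : ℝ) : IntervalIntegrable (fun r : ℝ => Real.exp (-r ^ 2)) volume a b :=
  continuous_nexp.intervalIntegrable a b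

lemma hasDerivAt_erf (u : ℝ) : HasDerivAt erf (2 / Real.sqrt Real.pi * Real.exp (-u ^ 2)) u := by
  have h : HasDerivAt (fun u : ℝ => ∫ r in (0:ℝ)..u, Real.exp (-r ^ 2)) (Real.exp (-u ^ 2)) u :=
    intervalIntegral.integral_hasDerivAt_right (intervalIntegrable_nexp 0 u)
      (continuous_nexp.stronglyMeasurableAtFilter _ _) continuous_nexp.continuousAt
  exact h.const_mul (2 / Real.sqrt Real.pi)

lemma continuous_erf : Continuous erf := by
  have : Differentiable ℝ erf := fun u => (hasDerivAt_erf u).differentiableAt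
  exact this.continuous

lemma erf_zero : erf 0 = 0 := by simp [erf]

lemma erf_neg (u : ℝ) : erf (-u) = - erf u := by
  have h0 := intervalIntegral.integral_comp_neg (a := (0:ℝ)) (b := u) (fun r : ℝ => Real.exp (-r ^ 2))
  simp only [neg_zero, neg_sq] at h0
  have h : (∫ r in (0:ℝ)..(-u), Real.exp (-r ^ 2)) = - ∫ r in (0:ℝ)..u, Real.exp (-r ^ 2) := by
    rw [intervalIntegral.integral_symm, ← h0]
  simp [erf, h]

lemma abs_erf_le_one (u : ℝ) : |erf u| ≤ 1 := by
  have key : ∀ u : ℝ, 0 ≤ u → |erf u| ≤ 1 := by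
    intro u hu
    have h1 : (∫ r in (0:ℝ)..u, Real.exp (-r ^ 2)) = ∫ r in Set.Ioc 0 u, Real.exp (-r ^ 2) := by
      rw [intervalIntegral.integral_of_le hu]
    have hInt : IntegrableOn (fun r : ℝ => Real.exp (-r ^ 2)) (Set.Ioi 0) volume := by
      have := integrable_exp_neg_mul_sq (b := 1) one_pos
      simpa using this.integrableOn
    have h2 : (∫ r in Set.Ioc 0 u, Real.exp (-r ^ 2)) ≤ ∫ r in Set.Ioi 0, Real.exp (-r ^ 2) := by
      apply setIntegral_mono_set hInt
      · filter_upwards with x using (Real.exp_pos _).le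
      · exact Filter.Eventually.of_forall (Set.Ioc_subset_Ioi_self)
    have h3 : (∫ r in Set.Ioi (0:ℝ), Real.exp (-r ^ 2)) = Real.sqrt π / 2 := by
      have := integral_gaussian_Ioi 1
      simpa using this
    have hnn : 0 ≤ ∫ r in (0:ℝ)..u, Real.exp (-r ^ 2) := by
      apply intervalIntegral.integral_nonneg hu
      intro x _; exact (Real.exp_pos _).le
    have hsq : 0 < Real.sqrt π := Real.sqrt_pos.mpr Real.pi_pos
    rw [erf, abs_mul, abs_of_nonneg hnn, abs_of_nonneg (by positivity : (0:ℝ) ≤ 2 / Real.sqrt π)]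
    calc 2 / Real.sqrt π * (∫ r in (0:ℝ)..u, Real.exp (-r ^ 2))
        ≤ 2 / Real.sqrt π * (Real.sqrt π / 2) := by
          apply mul_le_mul_of_nonneg_left _ (by positivity)
          rw [h1]; exact h2.trans_eq h3
      _ = 1 := by field_simp
  rcases le_or_gt 0 u with h | h
  · exact key u h
  · have := key (-u) (by linarith)
    rwa [erf_neg, abs_neg] at this

lemma integral_gaussianReal_eq {v : ℝ≥0} (hv : v ≠ 0) (f : ℝ → ℝ) :
    ∫ x, f x ∂(gaussianReal 0 v) = ∫ x, gaussianPDFReal 0 v x * f x := by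
  rw [gaussianReal_of_var_ne_zero 0 hv, gaussianPDF_def]
  have : ∀ x : ℝ, ENNReal.ofReal (gaussianPDFReal 0 v x)
      = ((gaussianPDFReal 0 v x).toNNReal : ℝ≥0∞) := fun x => rfl
  simp_rw [this]
  rw [integral_withDensity_eq_integral_smul (measurable_gaussianPDFReal 0 v).real_toNNReal f]
  congr 1
  ext x
  rw [NNReal.smul_def, smul_eq_mul, Real.coe_toNNReal _ (gaussianPDFReal_nonneg 0 v x)]

lemma integrable_sq_mul_exp_neg_mul_sq {b : ℝ} (hb : 0 < b) :
    Integrable fun x : ℝ => x ^ 2 * Real.exp (-b * x ^ 2) := by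
  have := integrable_rpow_mul_exp_neg_mul_sq hb (s := 2) (by norm_num)
  simpa [Real.rpow_two] using this

lemma integral_sq_mul_exp_neg_mul_sq {b : ℝ} (hb : 0 < b) :
    ∫ x : ℝ, x ^ 2 * Real.exp (-b * x ^ 2) = Real.sqrt (π / b) / (2 * b) := by
  have hsb : 0 < Real.sqrt b := Real.sqrt_pos.mpr hb
  have hsp : 0 < Real.sqrt π := Real.sqrt_pos.mpr Real.pi_pos
  have hIoi : ∫ x in Set.Ioi (0:ℝ), x ^ 2 * Real.exp (-b * x ^ 2)
      = Real.sqrt (π / b) / (4 * b) := by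
    have h := integral_rpow_mul_exp_neg_mul_rpow (p := 2) (q := 2) (b := b)
      two_pos (by norm_num) hb
    simp_rw [Real.rpow_two] at h
    have hg : Real.Gamma (((2:ℝ) + 1) / 2) = Real.sqrt π / 2 := by
      rw [show (((2:ℝ)+1)/2 : ℝ) = 1/2 + 1 by norm_num, Real.Gamma_add_one (by norm_num),
        Real.Gamma_one_half_eq]
      ring
    have hbp : b ^ (-((2:ℝ)+1)/2 : ℝ) = (b * Real.sqrt b)⁻¹ := by
      rw [show (-((2:ℝ)+1)/2 : ℝ) = -(1 + 1/2) by norm_num, Real.rpow_neg hb.le,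
        Real.rpow_add hb, Real.rpow_one, ← Real.sqrt_eq_rpow]
    rw [h, hg, hbp, Real.sqrt_div' _ hb.le]
    field_simp
    ring_nf
  have hIic : ∫ x in Set.Iic (0:ℝ), x ^ 2 * Real.exp (-b * x ^ 2)
      = ∫ x in Set.Ioi (0:ℝ), x ^ 2 * Real.exp (-b * x ^ 2) := by
    have h := integral_comp_neg_Ioi (c := 0) (f := fun x : ℝ => x ^ 2 * Real.exp (-b * x ^ 2))
    simp only [neg_sq, neg_zero] at h
    exact h.symm
  rw [← intervalIntegral.integral_Iic_add_Ioi ((integrable_sq_mul_exp_neg_mul_sq hb).integrableOn)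
    ((integrable_sq_mul_exp_neg_mul_sq hb).integrableOn), hIic, hIoi]
  ring

lemma integrable_gaussianReal_iff {v : ℝ≥0} (hv : v ≠ 0) {g : ℝ → ℝ} :
    Integrable g (gaussianReal 0 v) ↔
      Integrable (fun x => g x * gaussianPDFReal 0 v x) volume := by
  rw [gaussianReal_of_var_ne_zero 0 hv, integrable_withDensity_iff (measurable_gaussianPDF 0 v)
    (Filter.Eventually.of_forall fun x => ENNReal.ofReal_lt_top)]
  constructor <;> intro h <;> [skip; skip] <;>
  · apply h.congr
    filter_upwards with x
    rw [gaussianPDF, ENNReal.toReal_ofReal (gaussianPDFReal_nonneg 0 v x)]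

lemma integrable_sq_gaussianReal : Integrable (fun x : ℝ => x ^ 2) (gaussianReal 0 1) := by
  rw [integrable_gaussianReal_iff one_ne_zero]
  have : (fun x : ℝ => x ^ 2 * gaussianPDFReal 0 1 x)
      = fun x => (Real.sqrt (2 * π * 1))⁻¹ * (x ^ 2 * Real.exp (-(1/2) * x ^ 2)) := by
    ext x
    simp only [gaussianPDFReal, NNReal.coe_one]
    ring_nf
  rw [this]
  exact ((integrable_sq_mul_exp_neg_mul_sq (by norm_num : (0:ℝ) < 1/2)).const_mul _)

lemma integrable_id_gaussianReal : Integrable (fun x : ℝ => x) (gaussianReal 0 1) := by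
  rw [integrable_gaussianReal_iff one_ne_zero]
  have : (fun x : ℝ => x * gaussianPDFReal 0 1 x)
      = fun x => (Real.sqrt (2 * π * 1))⁻¹ * (x * Real.exp (-(1/2) * x ^ 2)) := by
    ext x
    simp only [gaussianPDFReal, NNReal.coe_one]
    ring_nf
  rw [this]
  exact ((integrable_mul_exp_neg_mul_sq (by norm_num : (0:ℝ) < 1/2)).const_mul _)

lemma memℒp_two_id_gaussianReal : MemLp (fun x : ℝ => x) 2 (gaussianReal 0 1) := by
  exact (memLp_two_iff_integrable_sq (f := fun x : ℝ => x)
    measurable_id.aestronglyMeasurable).2 integrable_sq_gaussianReal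

lemma integral_id_gaussianReal : ∫ x, x ∂(gaussianReal 0 1) = 0 := by
  rw [integral_gaussianReal_eq one_ne_zero]
  have hodd : ∀ x : ℝ, gaussianPDFReal 0 1 (-x) * (-x) = -(gaussianPDFReal 0 1 x * x) := by
    intro x
    simp only [gaussianPDFReal, neg_sq, sub_zero, neg_zero]
    ring
  have := integral_neg_eq_self (fun x : ℝ => gaussianPDFReal 0 1 x * x) volume
  simp_rw [hodd, integral_neg] at this
  linarith

lemma integral_sq_gaussianReal : ∫ x, x ^ 2 ∂(gaussianReal 0 1) = 1 := by
  rw [integral_gaussianReal_eq one_ne_zero]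
  have : (fun x : ℝ => gaussianPDFReal 0 1 x * x ^ 2)
      = fun x => (Real.sqrt (2 * π * 1))⁻¹ * (x ^ 2 * Real.exp (-(1/2) * x ^ 2)) := by
    ext x
    simp only [gaussianPDFReal, NNReal.coe_one]
    ring_nf
  rw [this, integral_const_mul, integral_sq_mul_exp_neg_mul_sq (by norm_num : (0:ℝ) < 1/2)]
  rw [show π / (1/2 : ℝ) = 2 * π by ring]
  rw [mul_one, show (2 * (1/2:ℝ)) = 1 by norm_num]
  rw [inv_mul_eq_div, div_eq_one_iff_eq (by positivity)]
  ring

lemma integrable_of_bounded {α : Type*} [MeasurableSpace α] {μ : Measure α} [IsFiniteMeasure μ]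
    {f : α → ℝ} (hf : AEStronglyMeasurable f μ) (C : ℝ) (h : ∀ x, |f x| ≤ C) :
    Integrable f μ := by
  refine Integrable.mono' (integrable_const C) hf ?_
  filter_upwards with x using (by simpa using h x)

lemma integral_exp_shift_gaussianReal {v : ℝ≥0} (hv : v ≠ 0) (a : ℝ) :
    ∫ z, Real.exp (-(a + z) ^ 2) ∂(gaussianReal 0 v)
      = (Real.sqrt (1 + 2 * v))⁻¹ * Real.exp (-a ^ 2 / (1 + 2 * v)) := by
  have hv' : 0 < (v : ℝ) := lt_of_le_of_ne v.coe_nonneg (by exact_mod_cast (Ne.symm hv))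
  set v' : ℝ := (v : ℝ) with hv'def
  set α : ℝ := (2 * v' + 1) / (2 * v') with hα
  have hαpos : 0 < α := by positivity
  set c : ℝ := 2 * v' * a / (2 * v' + 1) with hc
  rw [integral_gaussianReal_eq hv]
  have key : ∀ z : ℝ, gaussianPDFReal 0 v z * Real.exp (-(a + z) ^ 2)
      = ((Real.sqrt (2 * π * v'))⁻¹ * Real.exp (-a ^ 2 / (1 + 2 * v')))
          * Real.exp (-α * (z + c) ^ 2) := by
    intro z
    simp only [gaussianPDFReal, sub_zero]
    rw [mul_assoc ((Real.sqrt (2 * π * (v:ℝ)))⁻¹), ← Real.exp_add,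
      mul_assoc ((Real.sqrt (2 * π * (v:ℝ)))⁻¹), ← Real.exp_add]
    congr 2
    rw [hα, hc]
    field_simp
    ring
  simp_rw [key]
  rw [integral_const_mul]
  have hshift : ∫ z : ℝ, Real.exp (-α * (z + c) ^ 2) = Real.sqrt (π / α) := by
    rw [integral_add_right_eq_self (fun z : ℝ => Real.exp (-α * z ^ 2)) c]
    exact integral_gaussian α
  rw [hshift]
  have h1 : π / α = 2 * π * v' / (1 + 2 * v') := by
    rw [hα]; field_simp; ring
  have h2 : Real.sqrt (π / α) = Real.sqrt (2 * π * v') / Real.sqrt (1 + 2 * v') := by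
    rw [h1, Real.sqrt_div (by positivity)]
  rw [h2]
  have h3 : (0:ℝ) < Real.sqrt (2 * π * v') := Real.sqrt_pos.mpr (by positivity)
  have h4 : (0:ℝ) < Real.sqrt (1 + 2 * v') := Real.sqrt_pos.mpr (by positivity)
  field_simp

lemma aesm_erf_shift {v : ℝ≥0} (a : ℝ) :
    AEStronglyMeasurable (fun z => erf (a + z)) (gaussianReal 0 v) :=
  (continuous_erf.comp (continuous_const.add continuous_id)).aestronglyMeasurable

lemma integrable_erf_shift {v : ℝ≥0} (a : ℝ) :
    Integrable (fun z => erf (a + z)) (gaussianReal 0 v) :=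
  integrable_of_bounded (aesm_erf_shift a) 1 (fun z => abs_erf_le_one _)

lemma integral_erf_gaussianReal_zero {v : ℝ≥0} (hv : v ≠ 0) :
    ∫ z, erf z ∂(gaussianReal 0 v) = 0 := by
  rw [integral_gaussianReal_eq hv]
  have hodd : ∀ x : ℝ, gaussianPDFReal 0 v (-x) * erf (-x) = -(gaussianPDFReal 0 v x * erf x) := by
    intro x
    rw [erf_neg]
    simp only [gaussianPDFReal, neg_sq, sub_zero, neg_zero]
    ring
  have := integral_neg_eq_self (fun x : ℝ => gaussianPDFReal 0 v x * erf x) volume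
  simp_rw [hodd, integral_neg] at this
  linarith

lemma hasDerivAt_integral_erf_shift {v : ℝ≥0} (hv : v ≠ 0) (a : ℝ) :
    HasDerivAt (fun a => ∫ z, erf (a + z) ∂(gaussianReal 0 v))
      (2 / Real.sqrt π * ((Real.sqrt (1 + 2 * v))⁻¹ * Real.exp (-a ^ 2 / (1 + 2 * v)))) a := by
  have h := hasDerivAt_integral_of_dominated_loc_of_deriv_le (μ := gaussianReal 0 v)
    (F := fun x z => erf (x + z))
    (F' := fun x z => 2 / Real.sqrt π * Real.exp (-(x + z) ^ 2))
    (x₀ := a) (bound := fun _ => 2 / Real.sqrt π) (s := Metric.ball a 1) (Metric.ball_mem_nhds a one_pos)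
    (Filter.Eventually.of_forall fun x => aesm_erf_shift x)
    (integrable_erf_shift a)
    ((continuous_const.mul (Real.continuous_exp.comp
      (((continuous_const.add continuous_id).pow 2).neg))).aestronglyMeasurable)
    ?_ (integrable_const _) ?_
  · have h2 := h.2
    rwa [integral_const_mul, integral_exp_shift_gaussianReal hv a] at h2
  · filter_upwards with z
    intro x _
    rw [Real.norm_eq_abs, abs_mul, abs_of_nonneg (by positivity : (0:ℝ) ≤ 2 / Real.sqrt π),
      abs_of_nonneg (Real.exp_pos _).le]
    have h1 : Real.exp (-(x + z) ^ 2) ≤ 1 := Real.exp_le_one_iff.mpr (neg_nonpos.mpr (sq_nonneg _))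
    exact mul_le_of_le_one_right (by positivity) h1
  · filter_upwards with z
    intro x _
    have := (hasDerivAt_erf (x + z)).comp x ((hasDerivAt_id x).add_const z)
    rw [mul_one] at this
    exact this

lemma integral_erf_shift_gaussianReal {v : ℝ≥0} (hv : v ≠ 0) (a : ℝ) :
    ∫ z, erf (a + z) ∂(gaussianReal 0 v) = erf (a / Real.sqrt (1 + 2 * v)) := by
  set c : ℝ := Real.sqrt (1 + 2 * v) with hcdef
  have hc : 0 < c := Real.sqrt_pos.mpr (by positivity)
  have hcsq : c ^ 2 = 1 + 2 * v := Real.sq_sqrt (by positivity)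
  set f : ℝ → ℝ := fun a => (∫ z, erf (a + z) ∂(gaussianReal 0 v)) - erf (a / c) with hfdef
  have hderiv : ∀ x : ℝ, HasDerivAt f 0 x := by
    intro x
    have h1 := hasDerivAt_integral_erf_shift hv x
    have h2 : HasDerivAt (fun a : ℝ => erf (a / c))
        (2 / Real.sqrt π * ((Real.sqrt (1 + 2 * v))⁻¹ * Real.exp (-x ^ 2 / (1 + 2 * v)))) x := by
      have := (hasDerivAt_erf (x / c)).comp x ((hasDerivAt_id x).div_const c)
      have heq : 2 / Real.sqrt π * Real.exp (-(x / c) ^ 2) * (1 / c)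
          = 2 / Real.sqrt π * ((Real.sqrt (1 + 2 * v))⁻¹ * Real.exp (-x ^ 2 / (1 + 2 * v))) := by
        rw [div_pow, ← hcsq, hcdef]
        rw [neg_div]
        field_simp
        rw [Real.sqrt_sq (Real.sqrt_nonneg _)]
      rw [← heq]
      exact this
    have h3 := h1.sub h2
    rw [sub_self] at h3
    exact h3
  have hconst : f a = f 0 :=
    is_const_of_deriv_eq_zero (fun x => (hderiv x).differentiableAt)
      (fun x => (hderiv x).deriv) a 0
  have hf0 : f 0 = 0 := by
    simp only [hfdef, zero_add, zero_div, erf_zero, sub_zero]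
    exact integral_erf_gaussianReal_zero hv
  have := hconst.trans hf0
  rw [hfdef] at this
  simp only [sub_eq_zero] at this
  exact this

lemma measurable_erf : Measurable erf := continuous_erf.measurable

lemma integral_erf_linear (t c : ℝ) (hc : c ≠ 0) :
    ∫ x, erf (t + c * x) ∂(gaussianReal 0 1) = erf (t / Real.sqrt (1 + 2 * c ^ 2)) := by
  have hv' : (⟨c ^ 2, sq_nonneg c⟩ : ℝ≥0) ≠ 0 := by
    intro h
    have h2 : c ^ 2 = 0 := congrArg NNReal.toReal h
    exact hc (pow_eq_zero_iff two_ne_zero |>.mp h2)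
  have hmap : Measure.map (fun x => c * x) (gaussianReal 0 1)
      = gaussianReal 0 (⟨c ^ 2, sq_nonneg c⟩ : ℝ≥0) := by
    have h := gaussianReal_map_const_mul (μ := 0) (v := 1) c
    rw [mul_zero, mul_one] at h
    exact h
  have h1 : ∫ x, erf (t + c * x) ∂(gaussianReal 0 1)
      = ∫ y, erf (t + y) ∂(Measure.map (fun x => c * x) (gaussianReal 0 1)) := by
    rw [integral_map (measurable_const_mul c).aemeasurable]
    exact (continuous_erf.comp (continuous_const.add continuous_id)).aestronglyMeasurable
  rw [h1, hmap, integral_erf_shift_gaussianReal hv' t]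
  rfl

lemma integral_erf_sq_linear (t c : ℝ) (hc : c ≠ 0) :
    ∫ x, erf (t + c * x) ^ 2 ∂(gaussianReal 0 1) = zeta t (c ^ 2) := by
  have hmap : Measure.map (fun x => c * x) (gaussianReal 0 1)
      = gaussianReal 0 (⟨c ^ 2, sq_nonneg c⟩ : ℝ≥0) := by
    have h := gaussianReal_map_const_mul (μ := 0) (v := 1) c
    rw [mul_zero, mul_one] at h
    exact h
  have h1 : ∫ x, erf (t + c * x) ^ 2 ∂(gaussianReal 0 1)
      = ∫ y, erf (t + y) ^ 2 ∂(Measure.map (fun x => c * x) (gaussianReal 0 1)) := by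
    rw [integral_map (measurable_const_mul c).aemeasurable]
    exact ((continuous_erf.comp (continuous_const.add continuous_id)).pow 2).aestronglyMeasurable
  have h2 : (c ^ 2).toNNReal = (⟨c ^ 2, sq_nonneg c⟩ : ℝ≥0) := by
    exact Real.toNNReal_of_nonneg (sq_nonneg c)
  rw [h1, hmap, zeta, h2]

section OmegaSide

variable {Ω : Type*} [MeasurableSpace Ω] {P : Measure Ω} [IsProbabilityMeasure P]
  {X : Ω → ℝ}

lemma integral_comp_std (hXm : Measurable X) (hX : Measure.map X P = gaussianReal 0 1)
    {f : ℝ → ℝ} (hf : AEStronglyMeasurable f (gaussianReal 0 1)) :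
    ∫ ω, f (X ω) ∂P = ∫ x, f x ∂(gaussianReal 0 1) := by
  rw [← hX, integral_map hXm.aemeasurable]
  rwa [hX]

lemma integral_std_eq_zero (hXm : Measurable X) (hX : Measure.map X P = gaussianReal 0 1) :
    ∫ ω, X ω ∂P = 0 := by
  have := integral_comp_std hXm hX (f := fun x => x) aestronglyMeasurable_id
  rw [this, _root_.integral_id_gaussianReal]

lemma integral_std_sq_eq_one (hXm : Measurable X) (hX : Measure.map X P = gaussianReal 0 1) :
    ∫ ω, X ω ^ 2 ∂P = 1 := by
  have := integral_comp_std hXm hX (f := fun x => x ^ 2)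
    (measurable_id.pow_const 2).aestronglyMeasurable
  rw [this, integral_sq_gaussianReal]

lemma memℒp_two_std (hXm : Measurable X) (hX : Measure.map X P = gaussianReal 0 1) :
    MemLp X 2 P := by
  have h : MemLp (fun x : ℝ => x) 2 (Measure.map X P) := by
    rw [hX]; exact memℒp_two_id_gaussianReal
  exact (memLp_map_measure_iff aestronglyMeasurable_id hXm.aemeasurable).1 h

end OmegaSide

lemma memℒp_two_mul_of_memℒp_of_bounded {Ω : Type*} [MeasurableSpace Ω] {P : Measure Ω}
    {X Z : Ω → ℝ} (hX : MemLp X 2 P) (hZ : AEStronglyMeasurable Z P)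
    (hbd : ∀ ω, |Z ω| ≤ 1) : MemLp (fun ω => X ω * Z ω) 2 P := by
  refine MemLp.of_le hX (hX.aestronglyMeasurable.mul hZ) ?_
  filter_upwards with ω
  rw [Real.norm_eq_abs, Real.norm_eq_abs, abs_mul, mul_comm]
  exact mul_le_of_le_one_left (abs_nonneg _) (hbd ω)

lemma integrable_mul_memℒp2 {Ω : Type*} [MeasurableSpace Ω] {P : Measure Ω}
    {f g : Ω → ℝ} (hf : MemLp f 2 P) (hg : MemLp g 2 P) :
    Integrable (fun ω => f ω * g ω) P := by
  refine Integrable.mono' (((hf.integrable_sq.add hg.integrable_sq)).div_const 2)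
    (hf.aestronglyMeasurable.mul hg.aestronglyMeasurable) ?_
  filter_upwards with ω
  simp only [Pi.add_apply]
  rw [Real.norm_eq_abs, abs_mul]
  nlinarith [sq_nonneg (|f ω| - |g ω|), sq_abs (f ω), sq_abs (g ω), abs_nonneg (f ω),
    abs_nonneg (g ω)]

lemma integral_add_sq {Ω : Type*} [MeasurableSpace Ω] {P : Measure Ω}
    {f g : Ω → ℝ} (hf : MemLp f 2 P) (hg : MemLp g 2 P) :
    ∫ ω, (f ω + g ω) ^ 2 ∂P
      = ∫ ω, f ω ^ 2 ∂P + 2 * ∫ ω, f ω * g ω ∂P + ∫ ω, g ω ^ 2 ∂P := by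
  have h1 : ∀ ω, (f ω + g ω) ^ 2 = f ω ^ 2 + 2 * (f ω * g ω) + g ω ^ 2 := fun ω => by ring
  simp_rw [h1]
  rw [integral_add (by exact (hf.integrable_sq.add ((integrable_mul_memℒp2 hf hg).const_mul 2)))
    hg.integrable_sq,
    integral_add hf.integrable_sq ((integrable_mul_memℒp2 hf hg).const_mul 2),
    integral_const_mul]

lemma integral_sub_sq {Ω : Type*} [MeasurableSpace Ω] {P : Measure Ω}
    {f g : Ω → ℝ} (hf : MemLp f 2 P) (hg : MemLp g 2 P) :
    ∫ ω, (f ω - g ω) ^ 2 ∂P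
      = ∫ ω, f ω ^ 2 ∂P - 2 * ∫ ω, f ω * g ω ∂P + ∫ ω, g ω ^ 2 ∂P := by
  have h := integral_add_sq hf hg.neg
  simp only [Pi.neg_apply, mul_neg, integral_neg, neg_sq, ← sub_eq_add_neg] at h
  linarith [h]
/-- Closed-form expression of the risk of the attention predictor restricted to the
invariant manifold. Here `Y 0 = ξ`, `Y 1 = H`, `Y 2 = V`, `Y 3 = V′`, and for
`2 ≤ ℓ ≤ L`, `Y (2ℓ) = H_ℓ` and `Y (2ℓ + 1) = K_ℓ`. The pair
`(ν·V + √(1 − ν²)·V′, V)` is a standard Gaussian pair with correlation `ν`. -/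
theorem stmt1 (d L : ℕ) (hd : 0 < d) (hL : 0 < L) (γ lam ε : ℝ)
    (hγ : 0 < γ) (hlam : 0 < lam) (hε : 0 ≤ ε)
    (κ ν : ℝ) (hκ : κ ∈ Set.Icc (-1 : ℝ) 1) (hν : ν ∈ Set.Icc (-1 : ℝ) 1)
    {Ω : Type*} [MeasurableSpace Ω] (P : Measure Ω) [IsProbabilityMeasure P]
    (Y : ℕ → Ω → ℝ) (hmeas : ∀ i, Measurable (Y i))
    (hindep : iIndepFun Y P)
    (hH : Measure.map (Y 1) P = gaussianReal 0 1)
    (hV : Measure.map (Y 2) P = gaussianReal 0 1)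
    (hV' : Measure.map (Y 3) P = gaussianReal 0 1)
    (hHl : ∀ ℓ, 2 ≤ ℓ → ℓ ≤ L → Measure.map (Y (2 * ℓ)) P = gaussianReal 0 1)
    (hKl : ∀ ℓ, 2 ≤ ℓ → ℓ ≤ L → Measure.map (Y (2 * ℓ + 1)) P = gaussianReal 0 1)
    (hxi2 : MemLp (Y 0) 2 P)
    (hximean : ∫ ω, Y 0 ω ∂P = 0)
    (hxivar : ∫ ω, (Y 0 ω) ^ 2 ∂P = ε ^ 2) :
    ∫ ω, (γ * (ν * Y 2 ω + Real.sqrt (1 - ν ^ 2) * Y 3 ω) + Y 0 ω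
        - γ * Y 2 ω * erf (lam * (Real.sqrt ((d : ℝ) / 2) * κ + γ * Y 1 ω))
        - ∑ ℓ ∈ Finset.Icc 2 L, Y (2 * ℓ + 1) ω * erf (lam * Y (2 * ℓ) ω)) ^ 2 ∂P
      = γ ^ 2
        - 2 * γ ^ 2 * ν * erf (lam * Real.sqrt ((d : ℝ) / 2) * κ /
            Real.sqrt (1 + 2 * lam ^ 2 * γ ^ 2))
        + γ ^ 2 * zeta (lam * Real.sqrt ((d : ℝ) / 2) * κ) (lam ^ 2 * γ ^ 2)
        + ((L : ℝ) - 1) * zeta 0 (lam ^ 2) + ε ^ 2 := by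
  classical
  set t : ℝ := lam * Real.sqrt ((d : ℝ) / 2) * κ with ht
  have hν2 : (0:ℝ) ≤ 1 - ν ^ 2 := by nlinarith [hν.1, hν.2]
  have hlγ : lam * γ ≠ 0 := by positivity
  -- measurability helpers
  have hφmeas : Measurable (fun x : ℝ => erf (t + lam * γ * x)) :=
    measurable_erf.comp (measurable_const.add (measurable_id.const_mul _))
  have hψmeas : Measurable (fun x : ℝ => erf (lam * x)) :=
    measurable_erf.comp (measurable_id.const_mul lam)
  have hFpair : Measurable (fun p : ℝ × ℝ => p.2 * erf (lam * p.1)) :=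
    measurable_snd.mul (measurable_erf.comp (measurable_fst.const_mul lam))
  have hGpair : Measurable (fun p : ℝ × ℝ => p.2 * erf (t + lam * γ * p.1)) :=
    measurable_snd.mul (measurable_erf.comp (measurable_const.add (measurable_fst.const_mul _)))
  -- independence helpers
  have hsingle : ∀ (i j : ℕ), i ≠ j → ∀ (f g : ℝ → ℝ), Measurable f → Measurable g →
      ∫ ω, f (Y i ω) * g (Y j ω) ∂P = (∫ ω, f (Y i ω) ∂P) * ∫ ω, g (Y j ω) ∂P := by
    intro i j hij f g hf hg
    exact ((hindep.indepFun hij).comp hf hg).integral_mul_eq_mul_integral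
      ((hf.comp (hmeas i)).aestronglyMeasurable) ((hg.comp (hmeas j)).aestronglyMeasurable)
  have hpairsingle : ∀ (i j k : ℕ), i ≠ k → j ≠ k →
      ∀ (F : ℝ × ℝ → ℝ) (g : ℝ → ℝ), Measurable F → Measurable g →
      ∫ ω, F (Y i ω, Y j ω) * g (Y k ω) ∂P
        = (∫ ω, F (Y i ω, Y j ω) ∂P) * ∫ ω, g (Y k ω) ∂P := by
    intro i j k hik hjk F g hF hg
    exact ((hindep.indepFun_prodMk hmeas i j k hik hjk).comp hF hg).integral_mul_eq_mul_integral
      ((hF.comp ((hmeas i).prodMk (hmeas j))).aestronglyMeasurable)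
      ((hg.comp (hmeas k)).aestronglyMeasurable)
  have hpairpair : ∀ (i j k l : ℕ), i ≠ k → i ≠ l → j ≠ k → j ≠ l →
      ∀ (F G : ℝ × ℝ → ℝ), Measurable F → Measurable G →
      ∫ ω, F (Y i ω, Y j ω) * G (Y k ω, Y l ω) ∂P
        = (∫ ω, F (Y i ω, Y j ω) ∂P) * ∫ ω, G (Y k ω, Y l ω) ∂P := by
    intro i j k l hik hil hjk hjl F G hF hG
    exact ((hindep.indepFun_prodMk_prodMk hmeas i j k l hik hil hjk hjl).comp hF hG).integral_mul_eq_mul_integral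
      ((hF.comp ((hmeas i).prodMk (hmeas j))).aestronglyMeasurable)
      ((hG.comp ((hmeas k).prodMk (hmeas l))).aestronglyMeasurable)
  -- moments
  have hEY2 : ∫ ω, Y 2 ω ∂P = 0 := integral_std_eq_zero (hmeas 2) hV
  have hEY3 : ∫ ω, Y 3 ω ∂P = 0 := integral_std_eq_zero (hmeas 3) hV'
  have hEY2sq : ∫ ω, Y 2 ω ^ 2 ∂P = 1 := integral_std_sq_eq_one (hmeas 2) hV
  have hEY3sq : ∫ ω, Y 3 ω ^ 2 ∂P = 1 := integral_std_sq_eq_one (hmeas 3) hV'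
  have hEphi : ∫ ω, erf (t + lam * γ * Y 1 ω) ∂P
      = erf (t / Real.sqrt (1 + 2 * lam ^ 2 * γ ^ 2)) := by
    rw [integral_comp_std (hmeas 1) hH hφmeas.aestronglyMeasurable,
      integral_erf_linear t (lam * γ) hlγ,
      show (1 + 2 * (lam * γ) ^ 2 : ℝ) = 1 + 2 * lam ^ 2 * γ ^ 2 by ring]
  have hEphisq : ∫ ω, erf (t + lam * γ * Y 1 ω) ^ 2 ∂P = zeta t (lam ^ 2 * γ ^ 2) := by
    rw [integral_comp_std (hmeas 1) hH (hφmeas.pow_const 2).aestronglyMeasurable,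
      integral_erf_sq_linear t (lam * γ) hlγ,
      show ((lam * γ) ^ 2 : ℝ) = lam ^ 2 * γ ^ 2 by ring]
  have hEpsisq : ∀ i : ℕ, Measure.map (Y i) P = gaussianReal 0 1 →
      ∫ ω, erf (lam * Y i ω) ^ 2 ∂P = zeta 0 (lam ^ 2) := by
    intro i hYi
    rw [integral_comp_std (hmeas i) hYi (hψmeas.pow_const 2).aestronglyMeasurable]
    have h := integral_erf_sq_linear 0 lam hlam.ne'
    simp only [zero_add] at h
    rw [h]
  -- L2 memberships
  have hY2L2 : MemLp (Y 2) 2 P := memℒp_two_std (hmeas 2) hV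
  have hY3L2 : MemLp (Y 3) 2 P := memℒp_two_std (hmeas 3) hV'
  have hCL2 : MemLp (fun ω => Y 2 ω * erf (t + lam * γ * Y 1 ω)) 2 P :=
    memℒp_two_mul_of_memℒp_of_bounded hY2L2
      (hφmeas.comp (hmeas 1)).aestronglyMeasurable (fun ω => abs_erf_le_one _)
  have hSfL2 : ∀ ℓ ∈ Finset.Icc 2 L,
      MemLp (fun ω => Y (2 * ℓ + 1) ω * erf (lam * Y (2 * ℓ) ω)) 2 P := by
    intro ℓ hℓ
    rw [Finset.mem_Icc] at hℓ
    exact memℒp_two_mul_of_memℒp_of_bounded (memℒp_two_std (hmeas _) (hKl ℓ hℓ.1 hℓ.2))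
      (hψmeas.comp (hmeas _)).aestronglyMeasurable (fun ω => abs_erf_le_one _)
  have hSL2 : MemLp (fun ω => ∑ ℓ ∈ Finset.Icc 2 L,
      Y (2 * ℓ + 1) ω * erf (lam * Y (2 * ℓ) ω)) 2 P := memLp_finsetSum _ hSfL2
  have hWξL2 : MemLp (fun ω => γ * ν * Y 2 ω + γ * Real.sqrt (1 - ν ^ 2) * Y 3 ω + Y 0 ω) 2 P :=
    ((hY2L2.const_mul (γ * ν)).add (hY3L2.const_mul (γ * Real.sqrt (1 - ν ^ 2)))).add hxi2
  have hAL2 : MemLp (fun ω => γ * ν * Y 2 ω + γ * Real.sqrt (1 - ν ^ 2) * Y 3 ω + Y 0 ω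
      - γ * (Y 2 ω * erf (t + lam * γ * Y 1 ω))) 2 P := hWξL2.sub (hCL2.const_mul γ)
  -- mean of the S summands is zero
  have hESf : ∀ ℓ, 2 ≤ ℓ → ℓ ≤ L →
      ∫ ω, Y (2 * ℓ + 1) ω * erf (lam * Y (2 * ℓ) ω) ∂P = 0 := by
    intro ℓ h2 hL'
    have h := hsingle (2 * ℓ + 1) (2 * ℓ) (by omega) (fun x => x) (fun x => erf (lam * x))
      measurable_id hψmeas
    rw [h, integral_std_eq_zero (hmeas _) (hKl ℓ h2 hL'), zero_mul]
  -- Step 0: rewrite the integrand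
  have hstep0 : ∫ ω, (γ * (ν * Y 2 ω + Real.sqrt (1 - ν ^ 2) * Y 3 ω) + Y 0 ω
        - γ * Y 2 ω * erf (lam * (Real.sqrt ((d : ℝ) / 2) * κ + γ * Y 1 ω))
        - ∑ ℓ ∈ Finset.Icc 2 L, Y (2 * ℓ + 1) ω * erf (lam * Y (2 * ℓ) ω)) ^ 2 ∂P
      = ∫ ω, ((γ * ν * Y 2 ω + γ * Real.sqrt (1 - ν ^ 2) * Y 3 ω + Y 0 ω
          - γ * (Y 2 ω * erf (t + lam * γ * Y 1 ω)))
        - ∑ ℓ ∈ Finset.Icc 2 L, Y (2 * ℓ + 1) ω * erf (lam * Y (2 * ℓ) ω)) ^ 2 ∂P := by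
    apply integral_congr_ae
    filter_upwards with ω
    rw [show lam * (Real.sqrt ((d : ℝ) / 2) * κ + γ * Y 1 ω) = t + lam * γ * Y 1 ω by
      rw [ht]; ring]
    ring
  rw [hstep0]
  -- expansion into three pieces
  rw [integral_sub_sq hAL2 hSL2]
  -- Piece A²
  have hA2 : ∫ ω, (γ * ν * Y 2 ω + γ * Real.sqrt (1 - ν ^ 2) * Y 3 ω + Y 0 ω
        - γ * (Y 2 ω * erf (t + lam * γ * Y 1 ω))) ^ 2 ∂P
      = γ ^ 2 + ε ^ 2
        - 2 * γ ^ 2 * ν * erf (t / Real.sqrt (1 + 2 * lam ^ 2 * γ ^ 2))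
        + γ ^ 2 * zeta t (lam ^ 2 * γ ^ 2) := by
    rw [integral_sub_sq hWξL2 (hCL2.const_mul γ)]
    -- (W+ξ)²
    have h1 : ∫ ω, (γ * ν * Y 2 ω + γ * Real.sqrt (1 - ν ^ 2) * Y 3 ω + Y 0 ω) ^ 2 ∂P
        = γ ^ 2 + ε ^ 2 := by
      have hWL2 : MemLp (fun ω => γ * ν * Y 2 ω + γ * Real.sqrt (1 - ν ^ 2) * Y 3 ω) 2 P :=
        (hY2L2.const_mul (γ * ν)).add (hY3L2.const_mul (γ * Real.sqrt (1 - ν ^ 2)))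
      rw [integral_add_sq hWL2 hxi2]
      have h11 : ∫ ω, (γ * ν * Y 2 ω + γ * Real.sqrt (1 - ν ^ 2) * Y 3 ω) ^ 2 ∂P
          = γ ^ 2 := by
        rw [integral_add_sq (hY2L2.const_mul (γ * ν)) (hY3L2.const_mul (γ * Real.sqrt (1 - ν ^ 2)))]
        rw [show (fun ω => (γ * ν * Y 2 ω) ^ 2) = fun ω => (γ * ν) ^ 2 * Y 2 ω ^ 2 from
          funext fun ω => by ring]
        rw [show (fun ω => (γ * Real.sqrt (1 - ν ^ 2) * Y 3 ω) ^ 2)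
          = fun ω => (γ * Real.sqrt (1 - ν ^ 2)) ^ 2 * Y 3 ω ^ 2 from funext fun ω => by ring]
        rw [show (fun ω => γ * ν * Y 2 ω * (γ * Real.sqrt (1 - ν ^ 2) * Y 3 ω))
          = fun ω => (γ * ν * (γ * Real.sqrt (1 - ν ^ 2))) * (Y 2 ω * Y 3 ω) from
          funext fun ω => by ring]
        rw [integral_const_mul, integral_const_mul, integral_const_mul, hEY2sq, hEY3sq,
          hsingle 2 3 (by omega) (fun x => x) (fun x => x) measurable_id measurable_id,
          hEY2, hEY3]
        rw [mul_pow, mul_pow, Real.sq_sqrt hν2]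
        ring
      have h12 : ∫ ω, (γ * ν * Y 2 ω + γ * Real.sqrt (1 - ν ^ 2) * Y 3 ω) * Y 0 ω ∂P = 0 := by
        rw [show (fun ω => (γ * ν * Y 2 ω + γ * Real.sqrt (1 - ν ^ 2) * Y 3 ω) * Y 0 ω)
          = fun ω => (γ * ν) * (Y 2 ω * Y 0 ω) + (γ * Real.sqrt (1 - ν ^ 2)) * (Y 3 ω * Y 0 ω)
          from funext fun ω => by ring]
        rw [integral_add ((integrable_mul_memℒp2 hY2L2 hxi2).const_mul _)
          ((integrable_mul_memℒp2 hY3L2 hxi2).const_mul _), integral_const_mul, integral_const_mul,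
          hsingle 2 0 (by omega) (fun x => x) (fun x => x) measurable_id measurable_id,
          hsingle 3 0 (by omega) (fun x => x) (fun x => x) measurable_id measurable_id,
          hximean]
        ring
      rw [h11, h12, hxivar]
      ring
    -- (W+ξ)·γC
    have h2 : ∫ ω, (γ * ν * Y 2 ω + γ * Real.sqrt (1 - ν ^ 2) * Y 3 ω + Y 0 ω)
          * (γ * (Y 2 ω * erf (t + lam * γ * Y 1 ω))) ∂P
        = γ ^ 2 * ν * erf (t / Real.sqrt (1 + 2 * lam ^ 2 * γ ^ 2)) := by
      rw [show (fun ω => (γ * ν * Y 2 ω + γ * Real.sqrt (1 - ν ^ 2) * Y 3 ω + Y 0 ω)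
          * (γ * (Y 2 ω * erf (t + lam * γ * Y 1 ω))))
        = fun ω => (γ * (γ * ν)) * (Y 2 ω ^ 2 * erf (t + lam * γ * Y 1 ω))
          + (γ * (γ * Real.sqrt (1 - ν ^ 2)))
              * ((Y 2 ω * erf (t + lam * γ * Y 1 ω)) * Y 3 ω)
          + γ * ((Y 2 ω * erf (t + lam * γ * Y 1 ω)) * Y 0 ω) from funext fun ω => by ring]
      have hi1 : Integrable (fun ω => Y 2 ω ^ 2 * erf (t + lam * γ * Y 1 ω)) P := by
        have := integrable_mul_memℒp2 hCL2 hY2L2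
        apply this.congr
        filter_upwards with ω
        ring
      have hi2 : Integrable (fun ω => (Y 2 ω * erf (t + lam * γ * Y 1 ω)) * Y 3 ω) P :=
        integrable_mul_memℒp2 hCL2 hY3L2
      have hi3 : Integrable (fun ω => (Y 2 ω * erf (t + lam * γ * Y 1 ω)) * Y 0 ω) P :=
        integrable_mul_memℒp2 hCL2 hxi2
      have hk12 : Integrable (fun ω => γ * (γ * ν) * (Y 2 ω ^ 2 * erf (t + lam * γ * Y 1 ω))
          + γ * (γ * Real.sqrt (1 - ν ^ 2))
              * (Y 2 ω * erf (t + lam * γ * Y 1 ω) * Y 3 ω)) P :=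
        (hi1.const_mul _).add (hi2.const_mul _)
      rw [integral_add hk12 (hi3.const_mul _),
        integral_add (hi1.const_mul _) (hi2.const_mul _),
        integral_const_mul, integral_const_mul, integral_const_mul]
      rw [hsingle 2 1 (by omega) (fun x => x ^ 2) (fun x => erf (t + lam * γ * x))
        (measurable_id.pow_const 2) hφmeas]
      rw [hpairsingle 1 2 3 (by omega) (by omega)
        (fun p => p.2 * erf (t + lam * γ * p.1)) (fun x => x) hGpair measurable_id]
      rw [hpairsingle 1 2 0 (by omega) (by omega)
        (fun p => p.2 * erf (t + lam * γ * p.1)) (fun x => x) hGpair measurable_id]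
      rw [hEY2sq, hEphi, hEY3, hximean]
      ring
    -- (γC)²
    have h3 : ∫ ω, (γ * (Y 2 ω * erf (t + lam * γ * Y 1 ω))) ^ 2 ∂P
        = γ ^ 2 * zeta t (lam ^ 2 * γ ^ 2) := by
      rw [show (fun ω => (γ * (Y 2 ω * erf (t + lam * γ * Y 1 ω))) ^ 2)
        = fun ω => γ ^ 2 * (Y 2 ω ^ 2 * erf (t + lam * γ * Y 1 ω) ^ 2) from
        funext fun ω => by ring]
      rw [integral_const_mul,
        hsingle 2 1 (by omega) (fun x => x ^ 2) (fun x => erf (t + lam * γ * x) ^ 2)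
          (measurable_id.pow_const 2) (hφmeas.pow_const 2),
        hEY2sq, hEphisq]
      ring
    rw [h1, h2, h3]
    ring
  -- Piece A·S
  have hAS : ∫ ω, (γ * ν * Y 2 ω + γ * Real.sqrt (1 - ν ^ 2) * Y 3 ω + Y 0 ω
        - γ * (Y 2 ω * erf (t + lam * γ * Y 1 ω)))
      * (∑ ℓ ∈ Finset.Icc 2 L, Y (2 * ℓ + 1) ω * erf (lam * Y (2 * ℓ) ω)) ∂P = 0 := by
    rw [show (fun ω => (γ * ν * Y 2 ω + γ * Real.sqrt (1 - ν ^ 2) * Y 3 ω + Y 0 ω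
          - γ * (Y 2 ω * erf (t + lam * γ * Y 1 ω)))
        * (∑ ℓ ∈ Finset.Icc 2 L, Y (2 * ℓ + 1) ω * erf (lam * Y (2 * ℓ) ω)))
      = fun ω => ∑ ℓ ∈ Finset.Icc 2 L,
          (γ * ν * Y 2 ω + γ * Real.sqrt (1 - ν ^ 2) * Y 3 ω + Y 0 ω
            - γ * (Y 2 ω * erf (t + lam * γ * Y 1 ω)))
          * (Y (2 * ℓ + 1) ω * erf (lam * Y (2 * ℓ) ω)) from
      funext fun ω => by rw [Finset.mul_sum]]
    rw [integral_finset_sum _ (fun ℓ hℓ => integrable_mul_memℒp2 hAL2 (hSfL2 ℓ hℓ))]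
    apply Finset.sum_eq_zero
    intro ℓ hℓ
    rw [Finset.mem_Icc] at hℓ
    obtain ⟨h2ℓ, hℓL⟩ := hℓ
    have hℓmem : ℓ ∈ Finset.Icc 2 L := Finset.mem_Icc.mpr ⟨h2ℓ, hℓL⟩
    have hSfL2' := hSfL2 ℓ hℓmem
    rw [show (fun ω => (γ * ν * Y 2 ω + γ * Real.sqrt (1 - ν ^ 2) * Y 3 ω + Y 0 ω
          - γ * (Y 2 ω * erf (t + lam * γ * Y 1 ω)))
        * (Y (2 * ℓ + 1) ω * erf (lam * Y (2 * ℓ) ω)))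
      = fun ω => (γ * ν) * ((Y (2 * ℓ + 1) ω * erf (lam * Y (2 * ℓ) ω)) * Y 2 ω)
        + (γ * Real.sqrt (1 - ν ^ 2)) * ((Y (2 * ℓ + 1) ω * erf (lam * Y (2 * ℓ) ω)) * Y 3 ω)
        + (Y (2 * ℓ + 1) ω * erf (lam * Y (2 * ℓ) ω)) * Y 0 ω
        - γ * ((Y (2 * ℓ + 1) ω * erf (lam * Y (2 * ℓ) ω))
            * (Y 2 ω * erf (t + lam * γ * Y 1 ω))) from funext fun ω => by ring]
    have hj1 : Integrable (fun ω => (Y (2 * ℓ + 1) ω * erf (lam * Y (2 * ℓ) ω)) * Y 2 ω) P :=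
      integrable_mul_memℒp2 hSfL2' hY2L2
    have hj2 : Integrable (fun ω => (Y (2 * ℓ + 1) ω * erf (lam * Y (2 * ℓ) ω)) * Y 3 ω) P :=
      integrable_mul_memℒp2 hSfL2' hY3L2
    have hj3 : Integrable (fun ω => (Y (2 * ℓ + 1) ω * erf (lam * Y (2 * ℓ) ω)) * Y 0 ω) P :=
      integrable_mul_memℒp2 hSfL2' hxi2
    have hj4 : Integrable (fun ω => (Y (2 * ℓ + 1) ω * erf (lam * Y (2 * ℓ) ω))
        * (Y 2 ω * erf (t + lam * γ * Y 1 ω))) P := integrable_mul_memℒp2 hSfL2' hCL2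
    have hj12 : Integrable (fun ω => γ * ν * (Y (2 * ℓ + 1) ω * erf (lam * Y (2 * ℓ) ω) * Y 2 ω)
        + γ * Real.sqrt (1 - ν ^ 2)
            * (Y (2 * ℓ + 1) ω * erf (lam * Y (2 * ℓ) ω) * Y 3 ω)) P :=
      (hj1.const_mul _).add (hj2.const_mul _)
    have hj123 : Integrable (fun ω => γ * ν * (Y (2 * ℓ + 1) ω * erf (lam * Y (2 * ℓ) ω) * Y 2 ω)
        + γ * Real.sqrt (1 - ν ^ 2)
            * (Y (2 * ℓ + 1) ω * erf (lam * Y (2 * ℓ) ω) * Y 3 ω)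
        + Y (2 * ℓ + 1) ω * erf (lam * Y (2 * ℓ) ω) * Y 0 ω) P := hj12.add hj3
    rw [integral_sub hj123 (hj4.const_mul _),
      integral_add hj12 hj3,
      integral_add (hj1.const_mul _) (hj2.const_mul _),
      integral_const_mul, integral_const_mul, integral_const_mul]
    rw [hpairsingle (2 * ℓ) (2 * ℓ + 1) 2 (by omega) (by omega)
      (fun p => p.2 * erf (lam * p.1)) (fun x => x) hFpair measurable_id]
    rw [hpairsingle (2 * ℓ) (2 * ℓ + 1) 3 (by omega) (by omega)
      (fun p => p.2 * erf (lam * p.1)) (fun x => x) hFpair measurable_id]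
    rw [hpairsingle (2 * ℓ) (2 * ℓ + 1) 0 (by omega) (by omega)
      (fun p => p.2 * erf (lam * p.1)) (fun x => x) hFpair measurable_id]
    rw [hpairpair (2 * ℓ) (2 * ℓ + 1) 1 2 (by omega) (by omega) (by omega) (by omega)
      (fun p => p.2 * erf (lam * p.1)) (fun p => p.2 * erf (t + lam * γ * p.1)) hFpair hGpair]
    rw [hESf ℓ h2ℓ hℓL]
    ring
  -- Piece S²
  have hS2 : ∫ ω, (∑ ℓ ∈ Finset.Icc 2 L, Y (2 * ℓ + 1) ω * erf (lam * Y (2 * ℓ) ω)) ^ 2 ∂P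
      = ((L : ℝ) - 1) * zeta 0 (lam ^ 2) := by
    rw [show (fun ω => (∑ ℓ ∈ Finset.Icc 2 L, Y (2 * ℓ + 1) ω * erf (lam * Y (2 * ℓ) ω)) ^ 2)
      = fun ω => ∑ ℓ ∈ Finset.Icc 2 L, ∑ m ∈ Finset.Icc 2 L,
          (Y (2 * ℓ + 1) ω * erf (lam * Y (2 * ℓ) ω))
            * (Y (2 * m + 1) ω * erf (lam * Y (2 * m) ω)) from
      funext fun ω => by rw [sq, Finset.sum_mul_sum]]
    rw [integral_finset_sum _ (fun ℓ hℓ => integrable_finset_sum _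
      (fun m hm => integrable_mul_memℒp2 (hSfL2 ℓ hℓ) (hSfL2 m hm)))]
    have hinner : ∀ ℓ ∈ Finset.Icc 2 L,
        (∫ ω, ∑ m ∈ Finset.Icc 2 L, (Y (2 * ℓ + 1) ω * erf (lam * Y (2 * ℓ) ω))
          * (Y (2 * m + 1) ω * erf (lam * Y (2 * m) ω)) ∂P) = zeta 0 (lam ^ 2) := by
      intro ℓ hℓ
      rw [integral_finset_sum _ (fun m hm => integrable_mul_memℒp2 (hSfL2 ℓ hℓ) (hSfL2 m hm))]
      rw [Finset.mem_Icc] at hℓ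
      rw [Finset.sum_eq_single_of_mem ℓ (Finset.mem_Icc.mpr hℓ)]
      · rw [show (fun ω => (Y (2 * ℓ + 1) ω * erf (lam * Y (2 * ℓ) ω))
            * (Y (2 * ℓ + 1) ω * erf (lam * Y (2 * ℓ) ω)))
          = fun ω => Y (2 * ℓ + 1) ω ^ 2 * erf (lam * Y (2 * ℓ) ω) ^ 2 from
          funext fun ω => by ring]
        rw [hsingle (2 * ℓ + 1) (2 * ℓ) (by omega) (fun x => x ^ 2) (fun x => erf (lam * x) ^ 2)
          (measurable_id.pow_const 2) (hψmeas.pow_const 2)]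
        rw [integral_std_sq_eq_one (hmeas _) (hKl ℓ hℓ.1 hℓ.2), hEpsisq _ (hHl ℓ hℓ.1 hℓ.2)]
        ring
      · intro m hm hmℓ
        rw [Finset.mem_Icc] at hm
        rw [hpairpair (2 * ℓ) (2 * ℓ + 1) (2 * m) (2 * m + 1)
          (by omega) (by omega) (by omega) (by omega)
          (fun p => p.2 * erf (lam * p.1)) (fun p => p.2 * erf (lam * p.1)) hFpair hFpair]
        rw [hESf ℓ hℓ.1 hℓ.2]
        ring
    rw [Finset.sum_congr rfl hinner, Finset.sum_const, Nat.card_Icc, nsmul_eq_mul]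
    congr 1
    have : L + 1 - 2 = L - 1 := by omega
    rw [this, Nat.cast_sub hL]
    norm_num
  rw [hA2, hAS, hS2]
  ring
end

section
/- Let L be a positive integer, γ > 0, and let p₁, …, p_L be nonnegative reals with p₁ + ⋯ + p_L = 1. Then γ⁴ · Σ_{j=1}^{L} p_j² / (1 + p_j(γ² − 1)) ≤ γ²·(γ² + 1) · max_{1 ≤ j ≤ L} p_j. In particular, ε² + γ² − γ⁴·Σ_{j=1}^{L} p_j² / (1 + p_j(γ² − 1)) ≥ ε² + γ² − γ²(γ² + 1)·max_{1 ≤ j ≤ L} p_j for any ε ≥ 0. (This is the lower bound on the risk of the optimal linear predictor for single-location regression, where p_j is the probability that the informative token is at position j; note that each denominator satisfies 1 + p_j(γ² − 1) ≥ min(1, γ²) > 0.) -/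
/-- Lower bound on the risk of the optimal linear predictor for single-location
regression, where `p j` is the probability that the informative token is at
position `j`. -/
theorem stmt3 (L : ℕ) (hL : 0 < L) (γ ε : ℝ) (hγ : 0 < γ) (hε : 0 ≤ ε)
    (p : Fin L → ℝ) (hp : ∀ j, 0 ≤ p j) (hsum : ∑ j, p j = 1) :
    γ ^ 4 * ∑ j, (p j) ^ 2 / (1 + p j * (γ ^ 2 - 1))
      ≤ γ ^ 2 * (γ ^ 2 + 1) *
        Finset.univ.sup' (Finset.univ_nonempty_iff.mpr (Fin.pos_iff_nonempty.mp hL)) p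
    ∧ ε ^ 2 + γ ^ 2 - γ ^ 4 * ∑ j, (p j) ^ 2 / (1 + p j * (γ ^ 2 - 1))
      ≥ ε ^ 2 + γ ^ 2 - γ ^ 2 * (γ ^ 2 + 1) *
        Finset.univ.sup' (Finset.univ_nonempty_iff.mpr (Fin.pos_iff_nonempty.mp hL)) p := by
  set M := Finset.univ.sup' (Finset.univ_nonempty_iff.mpr (Fin.pos_iff_nonempty.mp hL)) p
    with hM
  have hγ2 : 0 < γ ^ 2 := by positivity
  have hpM : ∀ j, p j ≤ M := fun j => Finset.le_sup' p (Finset.mem_univ j)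
  have hp1 : ∀ j, p j ≤ 1 := by
    intro j
    rw [← hsum]
    exact Finset.single_le_sum (fun i _ => hp i) (Finset.mem_univ j)
  have key : γ ^ 4 * ∑ j, (p j) ^ 2 / (1 + p j * (γ ^ 2 - 1))
      ≤ γ ^ 2 * (γ ^ 2 + 1) * M := by
    have hterm : ∀ j : Fin L, γ ^ 4 * ((p j) ^ 2 / (1 + p j * (γ ^ 2 - 1)))
        ≤ γ ^ 2 * (γ ^ 2 + 1) * M * p j := by
      intro j
      have hD : 0 < 1 + p j * (γ ^ 2 - 1) := by
        nlinarith [hp j, hp1 j, hγ2, mul_nonneg (hp j) hγ2.le]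
      rw [mul_div_assoc', div_le_iff₀ hD]
      nlinarith [hp j, hp1 j, hγ2, mul_pos hγ2 hγ2,
        mul_nonneg (mul_nonneg hγ2.le (sq_nonneg (p j))) (sub_nonneg.mpr (hp1 j)),
        mul_nonneg (mul_nonneg (mul_pos hγ2 hγ2).le (sq_nonneg (p j))) (hp j),
        mul_le_mul_of_nonneg_right (hpM j)
          (mul_nonneg (mul_nonneg (mul_nonneg hγ2.le (by positivity : (0:ℝ) ≤ γ^2+1)) (hp j)) hD.le)]
    calc γ ^ 4 * ∑ j, (p j) ^ 2 / (1 + p j * (γ ^ 2 - 1))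
        = ∑ j, γ ^ 4 * ((p j) ^ 2 / (1 + p j * (γ ^ 2 - 1))) := Finset.mul_sum _ _ _
      _ ≤ ∑ j, γ ^ 2 * (γ ^ 2 + 1) * M * p j :=
          Finset.sum_le_sum fun j _ => hterm j
      _ = γ ^ 2 * (γ ^ 2 + 1) * M := by rw [← Finset.mul_sum, hsum, mul_one]
  exact ⟨key, by linarith⟩
end
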